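/- Let W ∈ ℝ^{n×n} be a symmetric random matrix whose entries (W_{ij})_{1≤i≤j≤n} are independent, with E[W_{ij}] = 0, Var(W_{ij}) ≤ σ², |W_{ij}| ≤ B almost surely, and each W_{ij} symmetric in distribution about 0. Let P_offdiag(A) denote the matrix obtained from A by setting all diagonal entries to 0. Then for any fixed unit vectors x, y ∈ ℝⁿ and any positive integer k: (a) E[ xᵀ P_offdiag(W^k) y ] = 0; and (b) if k is odd, E[ xᵀ W^k y ] = 0. -/

import Mathlib

open MeasureTheory ProbabilityTheory Matrix

/-- `P_offdiag A` sets the diagonal entries of `A` to `0`, leaving off-diagonal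
entries unchanged. -/
def Poffdiag {n : ℕ} (A : Matrix (Fin n) (Fin n) ℝ) : Matrix (Fin n) (Fin n) ℝ :=
  Matrix.of fun i j => if i = j then 0 else A i j


section Aux

lemma stmt9_joint_eq_pi {ι Ω : Type*} [Fintype ι] [MeasurableSpace Ω] {μ : Measure Ω}
    [IsProbabilityMeasure μ] {f : ι → Ω → ℝ} (hm : ∀ i, Measurable (f i))
    (h : iIndepFun f μ) :
    Measure.map (fun ω i => f i ω) μ = Measure.pi fun i => Measure.map (f i) μ := by
  haveI : ∀ i, IsProbabilityMeasure (Measure.map (f i) μ) :=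
    fun i => Measure.isProbabilityMeasure_map (hm i).aemeasurable
  refine (Measure.pi_eq fun s hs => ?_).symm
  rw [Measure.map_apply (measurable_pi_lambda _ hm) (MeasurableSet.univ_pi hs)]
  have hpre : (fun ω i => f i ω) ⁻¹' Set.pi Set.univ s = ⋂ i ∈ Finset.univ, f i ⁻¹' s i := by
    ext ω; simp [Set.mem_pi]
  rw [hpre, h.measure_inter_preimage_eq_mul Finset.univ (fun i _ => hs i)]
  exact Finset.prod_congr rfl fun i _ => (Measure.map_apply (hm i) (hs i)).symm

lemma stmt9_flip_eq {ι Ω : Type*} [Fintype ι] [MeasurableSpace Ω] {μ : Measure Ω}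
    [IsProbabilityMeasure μ] {f : ι → Ω → ℝ} (hm : ∀ i, Measurable (f i))
    (h : iIndepFun f μ)
    (hsgn : ∀ i, Measure.map (f i) μ = Measure.map (fun ω => -(f i ω)) μ)
    (c : ι → ℝ) (hc : ∀ i, c i = 1 ∨ c i = -1) :
    Measure.map (fun ω i => c i * f i ω) μ = Measure.map (fun ω i => f i ω) μ := by
  have h2 : iIndepFun (fun i ω => c i * f i ω) μ :=
    h.comp (fun i x => c i * x) (fun i => measurable_id.const_mul _)
  rw [stmt9_joint_eq_pi hm h, stmt9_joint_eq_pi (fun i => (hm i).const_mul _) h2]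
  congr 1
  funext i
  rcases hc i with h1 | h1
  · simp [h1]
  · have : (fun ω => c i * f i ω) = fun ω => -(f i ω) := by funext ω; rw [h1]; ring
    rw [this, ← hsgn i]

lemma stmt9_conj_pow {M₀ : Type*} [Monoid M₀] (D M : M₀) (hD : D * D = 1) (k : ℕ) :
    (D * M * D) ^ k = D * M ^ k * D := by
  induction k with
  | zero => simp [hD]
  | succ k ih =>
    rw [pow_succ, pow_succ, ih]
    simp only [mul_assoc]
    rw [show D * (D * (M * D)) = M * D by rw [← mul_assoc, hD, one_mul]]

/-- stmt9_reconstruct a symmetric matrix from its upper triangular entries -/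
def stmt9_recon {n : ℕ} (v : {q : Fin n × Fin n // q.1 ≤ q.2} → ℝ) : Matrix (Fin n) (Fin n) ℝ :=
  Matrix.of fun i j => if h : i ≤ j then v ⟨(i, j), h⟩ else v ⟨(j, i), le_of_not_ge h⟩

lemma stmt9_measurable_recon_pow {n : ℕ} (k : ℕ) :
    ∀ a b : Fin n, Measurable fun v => ((stmt9_recon v) ^ k) a b := by
  induction k with
  | zero => intro a b; simp only [pow_zero, Matrix.one_apply]; exact measurable_const
  | succ k ih =>
    intro a b
    simp only [pow_succ, Matrix.mul_apply]
    refine Finset.measurable_sum _ fun c _ => (ih a c).mul ?_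
    unfold stmt9_recon
    simp only [Matrix.of_apply]
    split_ifs <;> exact measurable_pi_apply _

lemma stmt9_pow_entry_bound {n : ℕ} (M : Matrix (Fin n) (Fin n) ℝ) (C : ℝ) (hC : 0 ≤ C)
    (h : ∀ i j, |M i j| ≤ C) (k : ℕ) : ∀ a b, |(M ^ k) a b| ≤ (n * C + 1) ^ k := by
  have hb : (0:ℝ) ≤ n * C + 1 := by positivity
  induction k with
  | zero =>
    intro a b
    simp only [pow_zero, Matrix.one_apply]
    split_ifs <;> simp
  | succ k ih =>
    intro a b
    simp only [pow_succ, Matrix.mul_apply]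
    calc |∑ c, (M ^ k) a c * M c b| ≤ ∑ c, |(M ^ k) a c * M c b| :=
          Finset.abs_sum_le_sum_abs _ _
      _ ≤ ∑ _c : Fin n, (n * C + 1) ^ k * C := by
          refine Finset.sum_le_sum fun c _ => ?_
          rw [abs_mul]
          exact mul_le_mul (ih a c) (h c b) (abs_nonneg _) (pow_nonneg hb _)
      _ = n * C * (n * C + 1) ^ k := by
          simp [Finset.sum_const]; ring
      _ ≤ (n * C + 1) ^ (k + 1) := by
          rw [pow_succ]
          rw [mul_comm ((n*C+1)^k) _]
          exact mul_le_mul_of_nonneg_right (by linarith) (pow_nonneg hb _)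

end Aux
section Core

variable {Ω : Type} [MeasurableSpace Ω] (μ : Measure Ω) [IsProbabilityMeasure μ]
  {n : ℕ} (W : Ω → Matrix (Fin n) (Fin n) ℝ)

lemma stmt9_entry_flip [IsProbabilityMeasure μ]
    (hsymm : ∀ ω i j, W ω i j = W ω j i)
    (hmeas : ∀ i j, Measurable fun ω => W ω i j)
    (hindep : iIndepFun
      (fun p : {q : Fin n × Fin n // q.1 ≤ q.2} => fun ω => W ω p.1.1 p.1.2) μ)
    (hsgn : ∀ i j, Measure.map (fun ω => W ω i j) μ
      = Measure.map (fun ω => -(W ω i j)) μ)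
    (s : Fin n → Fin n → ℝ) (hs : ∀ i j, s i j = s j i)
    (hs1 : ∀ i j, s i j = 1 ∨ s i j = -1) (k : ℕ) (a b : Fin n) :
    ∫ ω, ((Matrix.of fun i j => s i j * W ω i j) ^ k) a b ∂μ
      = ∫ ω, (W ω ^ k) a b ∂μ := by
  set ι := {q : Fin n × Fin n // q.1 ≤ q.2}
  set u : Ω → ι → ℝ := fun ω p => W ω p.1.1 p.1.2 with hu_def
  set c : ι → ℝ := fun p => s p.1.1 p.1.2 with hc_def
  have hu : Measurable u := measurable_pi_lambda _ fun p => hmeas _ _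
  have hu' : Measurable fun ω p => c p * u ω p :=
    measurable_pi_lambda _ fun p => (hmeas _ _).const_mul _
  have hR : ∀ ω, stmt9_recon (u ω) = W ω := by
    intro ω
    ext i j
    simp only [stmt9_recon, Matrix.of_apply]
    split_ifs
    · rfl
    · exact (hsymm ω j i)
  have hR' : ∀ ω, stmt9_recon (fun p => c p * u ω p)
      = Matrix.of fun i j => s i j * W ω i j := by
    intro ω
    ext i j
    simp only [stmt9_recon, Matrix.of_apply]
    split_ifs
    · rfl
    · show s j i * W ω j i = s i j * W ω i j
      rw [hs j i, hsymm ω j i]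
  set g : (ι → ℝ) → ℝ := fun v => ((stmt9_recon v) ^ k) a b with hg_def
  have hg : Measurable g := stmt9_measurable_recon_pow k a b
  have key : Measure.map (fun ω p => c p * u ω p) μ = Measure.map u μ :=
    stmt9_flip_eq (fun p => hmeas _ _) hindep (fun p => hsgn _ _) c (fun p => hs1 _ _)
  calc ∫ ω, ((Matrix.of fun i j => s i j * W ω i j) ^ k) a b ∂μ
      = ∫ ω, g (fun p => c p * u ω p) ∂μ := by
        refine integral_congr_ae (Filter.Eventually.of_forall fun ω => ?_)
        simp only [hg_def]
        rw [hR' ω]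
    _ = ∫ v, g v ∂(Measure.map (fun ω p => c p * u ω p) μ) :=
        (integral_map hu'.aemeasurable hg.aestronglyMeasurable).symm
    _ = ∫ v, g v ∂(Measure.map u μ) := by rw [key]
    _ = ∫ ω, g (u ω) ∂μ := integral_map hu.aemeasurable hg.aestronglyMeasurable
    _ = ∫ ω, (W ω ^ k) a b ∂μ := by
        refine integral_congr_ae (Filter.Eventually.of_forall fun ω => ?_)
        simp only [hg_def, hR ω]

end Core
section Entry

variable {Ω : Type} [MeasurableSpace Ω] {μ : Measure Ω} [IsProbabilityMeasure μ]
  {n : ℕ} {W : Ω → Matrix (Fin n) (Fin n) ℝ}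
  (hsymm : ∀ ω i j, W ω i j = W ω j i)
  (hmeas : ∀ i j, Measurable fun ω => W ω i j)
  (hindep : iIndepFun
    (fun p : {q : Fin n × Fin n // q.1 ≤ q.2} => fun ω => W ω p.1.1 p.1.2) μ)
  (hsgn : ∀ i j, Measure.map (fun ω => W ω i j) μ
    = Measure.map (fun ω => -(W ω i j)) μ)

include hsymm hmeas hindep hsgn

lemma stmt9_entry_offdiag (k : ℕ) (a b : Fin n) (hab : a ≠ b) :
    ∫ ω, (W ω ^ k) a b ∂μ = 0 := by
  set ε : Fin n → ℝ := fun i => if i = a then -1 else 1 with hε_def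
  have hεsq : ∀ i, ε i * ε i = 1 := by
    intro i; simp only [hε_def]; split_ifs <;> norm_num
  set s : Fin n → Fin n → ℝ := fun i j => ε i * ε j with hs_def
  have h1 := stmt9_entry_flip μ W hsymm hmeas hindep hsgn s
    (fun i j => mul_comm _ _)
    (by
      intro i j
      simp only [hs_def, hε_def]
      split_ifs <;> norm_num) k a b
  have hDD : (Matrix.diagonal ε) * (Matrix.diagonal ε) = 1 := by
    rw [Matrix.diagonal_mul_diagonal]
    have : (fun i => ε i * ε i) = fun _ => (1:ℝ) := funext hεsq
    rw [this]
    exact Matrix.diagonal_one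
  have hconj : ∀ ω, (Matrix.of fun i j => s i j * W ω i j)
      = Matrix.diagonal ε * W ω * Matrix.diagonal ε := by
    intro ω; ext i j
    simp only [Matrix.of_apply, Matrix.mul_diagonal, Matrix.diagonal_mul, hs_def]
    ring
  have h2 : ∀ ω, ((Matrix.of fun i j => s i j * W ω i j) ^ k) a b
      = -((W ω ^ k) a b) := by
    intro ω
    rw [hconj ω, stmt9_conj_pow _ _ hDD]
    simp only [Matrix.mul_diagonal, Matrix.diagonal_mul, hε_def]
    rw [if_neg (Ne.symm hab)]
    simp only [if_true]
    ring
  have h3 : ∫ ω, ((Matrix.of fun i j => s i j * W ω i j) ^ k) a b ∂μ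
      = -∫ ω, (W ω ^ k) a b ∂μ := by
    rw [← integral_neg]
    exact integral_congr_ae (Filter.Eventually.of_forall fun ω => h2 ω)
  rw [h3] at h1
  linarith

lemma stmt9_entry_odd (k : ℕ) (hk : Odd k) (a b : Fin n) :
    ∫ ω, (W ω ^ k) a b ∂μ = 0 := by
  have h1 := stmt9_entry_flip μ W hsymm hmeas hindep hsgn (fun _ _ => -1)
    (fun i j => rfl) (fun i j => Or.inr rfl) k a b
  have h2 : ∀ ω, ((Matrix.of fun i j => (-1:ℝ) * W ω i j) ^ k) a b
      = -((W ω ^ k) a b) := by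
    intro ω
    have : (Matrix.of fun i j => (-1:ℝ) * W ω i j) = -(W ω) := by
      ext i j; simp
    rw [this, hk.neg_pow]
    simp
  have h3 : ∫ ω, ((Matrix.of fun i j => (-1:ℝ) * W ω i j) ^ k) a b ∂μ
      = -∫ ω, (W ω ^ k) a b ∂μ := by
    rw [← integral_neg]
    exact integral_congr_ae (Filter.Eventually.of_forall fun ω => h2 ω)
  rw [h3] at h1
  linarith

end Entry

/-- Lemma 2, parts (a),(b): for symmetric noise `W` with independent,
centered, bounded upper-triangular entries symmetric about 0, and unit vectors `x, y`:
(a) `E[xᵀ P_offdiag(W^k) y] = 0`; (b) if `k` is odd then `E[xᵀ W^k y] = 0`. -/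
theorem stmt9 {Ω : Type} [MeasurableSpace Ω] (μ : Measure Ω) [IsProbabilityMeasure μ]
    {n : ℕ} (W : Ω → Matrix (Fin n) (Fin n) ℝ) (σ B : ℝ)
    (hsymm : ∀ ω i j, W ω i j = W ω j i)
    (hmeas : ∀ i j, Measurable fun ω => W ω i j)
    (hindep : iIndepFun
      (fun p : {q : Fin n × Fin n // q.1 ≤ q.2} => fun ω => W ω p.1.1 p.1.2) μ)
    (hmean : ∀ i j, ∫ ω, W ω i j ∂μ = 0)
    (hvar : ∀ i j, ∫ ω, (W ω i j) ^ 2 ∂μ ≤ σ ^ 2)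
    (hbdd : ∀ i j, ∀ᵐ ω ∂μ, |W ω i j| ≤ B)
    (hsgn : ∀ i j, Measure.map (fun ω => W ω i j) μ
      = Measure.map (fun ω => -(W ω i j)) μ)
    (x y : Fin n → ℝ) (hx : (∑ i, x i ^ 2) = 1) (hy : (∑ i, y i ^ 2) = 1)
    (k : ℕ) (hk : 0 < k) :
    (∫ ω, x ⬝ᵥ (Poffdiag (W ω ^ k)).mulVec y ∂μ = 0) ∧
    (Odd k → ∫ ω, x ⬝ᵥ (W ω ^ k).mulVec y ∂μ = 0) := by
  -- measurability of entries of W^k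
  have hmeasW : ∀ ω, stmt9_recon (fun p : {q : Fin n × Fin n // q.1 ≤ q.2} =>
      W ω p.1.1 p.1.2) = W ω := by
    intro ω
    ext i j
    simp only [stmt9_recon, Matrix.of_apply]
    split_ifs
    · rfl
    · exact hsymm ω j i
  have hmeask : ∀ a b, Measurable fun ω => (W ω ^ k) a b := by
    intro a b
    have := (stmt9_measurable_recon_pow (n := n) k a b).comp
      (measurable_pi_lambda (fun ω (p : {q : Fin n × Fin n // q.1 ≤ q.2}) =>
        W ω p.1.1 p.1.2) fun p => hmeas _ _)
    convert this using 1
    funext ω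
    simp only [Function.comp, hmeasW ω]
  -- a.e. bound on entries of W^k
  have hbdd' : ∀ᵐ ω ∂μ, ∀ i j, |W ω i j| ≤ B := by
    rw [ae_all_iff]
    intro i
    rw [ae_all_iff]
    exact hbdd i
  have hbddk : ∀ᵐ ω ∂μ, ∀ a b, |(W ω ^ k) a b| ≤ (n * |B| + 1) ^ k := by
    filter_upwards [hbdd'] with ω hω
    exact stmt9_pow_entry_bound (W ω) |B| (abs_nonneg _)
      (fun i j => le_trans (hω i j) (le_abs_self B)) k
  have hint : ∀ a b, Integrable (fun ω => (W ω ^ k) a b) μ := by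
    intro a b
    refine ⟨(hmeask a b).aestronglyMeasurable, HasFiniteIntegral.of_bounded (C := (n * |B| + 1) ^ k) ?_⟩
    filter_upwards [hbddk] with ω hω
    exact hω a b
  have hint' : ∀ a b, Integrable (fun ω => Poffdiag (W ω ^ k) a b) μ := by
    intro a b
    by_cases hab : a = b
    · simp only [Poffdiag, Matrix.of_apply, if_pos hab]
      exact integrable_const 0
    · simp only [Poffdiag, Matrix.of_apply, if_neg hab]
      exact hint a b
  -- expansion of quadratic form
  have hexp : ∀ (M : Matrix (Fin n) (Fin n) ℝ),
      x ⬝ᵥ M.mulVec y = ∑ a, ∑ b, x a * y b * M a b := by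
    intro M
    simp only [dotProduct, Matrix.mulVec, Finset.mul_sum]
    exact Finset.sum_congr rfl fun a _ => Finset.sum_congr rfl fun b _ => by ring
  constructor
  · have : (fun ω => x ⬝ᵥ (Poffdiag (W ω ^ k)).mulVec y)
        = fun ω => ∑ a, ∑ b, x a * y b * Poffdiag (W ω ^ k) a b := by
      funext ω; exact hexp _
    rw [this]
    rw [integral_finset_sum _ fun a _ => integrable_finset_sum _
      fun b _ => ((hint' a b).const_mul _)]
    refine Finset.sum_eq_zero fun a _ => ?_
    rw [integral_finset_sum _ fun b _ => ((hint' a b).const_mul _)]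
    refine Finset.sum_eq_zero fun b _ => ?_
    rw [integral_const_mul]
    by_cases hab : a = b
    · simp only [Poffdiag, Matrix.of_apply, if_pos hab, integral_zero, mul_zero]
    · simp only [Poffdiag, Matrix.of_apply, if_neg hab]
      rw [stmt9_entry_offdiag hsymm hmeas hindep hsgn k a b hab, mul_zero]
  · intro hodd
    have : (fun ω => x ⬝ᵥ (W ω ^ k).mulVec y)
        = fun ω => ∑ a, ∑ b, x a * y b * (W ω ^ k) a b := by
      funext ω; exact hexp _
    rw [this]
    rw [integral_finset_sum _ fun a _ => integrable_finset_sum _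
      fun b _ => ((hint a b).const_mul _)]
    refine Finset.sum_eq_zero fun a _ => ?_
    rw [integral_finset_sum _ fun b _ => ((hint a b).const_mul _)]
    refine Finset.sum_eq_zero fun b _ => ?_
    rw [integral_const_mul,
      stmt9_entry_odd hsymm hmeas hindep hsgn k hodd a b, mul_zero]
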